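/- Let ρ, λ : ℝ≥0 → ℝ≥0 be functions of class K∞ (continuous, strictly increasing, zero at zero, unbounded) with λ(s) > s for all s > 0 (so that λ − id is also of class K∞). Then for all a, b ≥ 0, ρ(a + b) ≤ ρ(λ(a)) + ρ(λ((λ − id)⁻¹(b))). -/

import Mathlib

/-- A class K∞ function: continuous, strictly increasing, zero at zero, unbounded. -/
def IsKInf (f : NNReal → NNReal) : Prop :=
  Continuous f ∧ StrictMono f ∧ f 0 = 0 ∧ Filter.Tendsto f Filter.atTop Filter.atTop

/-- Weak triangle inequality for K∞ functions. -/
theorem kinf_weak_triangle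
    (ρ lam : NNReal → NNReal) (hρ : IsKInf ρ) (hlam : IsKInf lam)
    (hgt : ∀ s, 0 < s → s < lam s)
    (hlamid : IsKInf (fun s => lam s - s))
    (g : NNReal → NNReal)
    (hg : Function.RightInverse g (fun s => lam s - s)) :
    ∀ a b : NNReal, ρ (a + b) ≤ ρ (lam a) + ρ (lam (g b)) := by
  intro a b
  have hle : ∀ s : NNReal, s ≤ lam s := by
    intro s
    rcases eq_or_lt_of_le (zero_le : 0 ≤ s) with h | h
    · simp [← h, hlam.2.2.1]
    · exact (hgt s h).le
  have hρmono := hρ.2.1.monotone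
  have hmono : Monotone (fun s => lam s - s) := hlamid.2.1.monotone
  rcases le_total (g b) a with h | h
  · have hb : b ≤ lam a - a := by
      have := hmono h
      simpa [hg b] using this
    have : a + b ≤ lam a := by
      calc a + b ≤ a + (lam a - a) := add_le_add_right hb a
        _ = lam a := add_tsub_cancel_of_le (hle a)
    exact le_trans (hρmono this) le_self_add
  · have : a + b ≤ lam (g b) := by
      calc a + b ≤ g b + b := add_le_add_left h b
        _ = g b + (lam (g b) - g b) := by rw [show lam (g b) - g b = b from hg b]
        _ = lam (g b) := add_tsub_cancel_of_le (hle (g b))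
    exact le_trans (hρmono this) le_add_self
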